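/- Let σ : ℝ → ℝ be nondecreasing, bounded and right-continuous, with associated Lebesgue–Stieltjes measure μ_σ. Let φ̂ : ℝ × ℝ × (0,∞) → ℝ (written φ̂(z; t₁, t₃)) be such that for each z the map (t₁,t₃) ↦ φ̂(z;t₁,t₃) is C³ in t₁ and C¹ in t₃, and for each (t₁,t₃) the functions r ↦ φ̂(r;t₁,t₃)² and r ↦ φ̂(r;t₁,t₃)·∂_{t₁}φ̂(r;t₁,t₃) are μ_σ-integrable. Define φ(z;x,t) := t^{-1/2}·φ̂(z; −x/t, 1/(3t²)) for z ∈ ℝ, x ∈ ℝ, t > 0, and suppose that for all z, x, t: −∂_t φ(z;x,t) = (2/3)∂_x³φ(z;x,t) + φ(z;x,t)/(2t) + (x/t)·∂_xφ(z;x,t) − (2/t)·φ(z;x,t)·∫_ℝ φ(r;x,t)·∂_xφ(r;x,t) dμ_σ(r) − (2/t)·∂_xφ(z;x,t)·∫_ℝ φ(r;x,t)² dμ_σ(r). Then φ̂ satisfies the integro-differential modified KdV equation: for all z, t₁ ∈ ℝ and t₃ > 0, ∂_{t₃}φ̂(z;t₁,t₃) = −∂_{t₁}³φ̂(z;t₁,t₃)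 + 3·∂_{t₁}φ̂(z;t₁,t₃)·∫_ℝ φ̂(r;t₁,t₃)² dμ_σ(r) + 3·φ̂(z;t₁,t₃)·∫_ℝ φ̂(r;t₁,t₃)·∂_{t₁}φ̂(r;t₁,t₃) dμ_σ(r). -/

import Mathlib

open MeasureTheory

lemma deriv_cmul_neg_div (g : ℝ → ℝ) (hg : Differentiable ℝ g) (c t : ℝ) :
    deriv (fun y => c * g (-y / t)) = fun y => c * (-1 / t) * deriv g (-y / t) := by
  funext y
  have h1 : HasDerivAt (fun y : ℝ => -y / t) (-1 / t) y := by
    simpa using ((hasDerivAt_id y).neg.div_const t)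
  have h2 : HasDerivAt (fun y => g (-y / t)) (deriv g (-y/t) * (-1/t)) y :=
    (hg (-y/t)).hasDerivAt.comp y h1
  rw [(h2.const_mul c).deriv]; ring

lemma iter3_cmul_neg_div (g : ℝ → ℝ) (hg : ContDiff ℝ 3 g) (c t : ℝ) :
    iteratedDeriv 3 (fun y => c * g (-y / t))
      = fun y => c * (-1/t)^3 * iteratedDeriv 3 g (-y/t) := by
  have h3 : ContDiff ℝ ((2:ℕ)+1) g := by exact_mod_cast hg
  have hg1 : Differentiable ℝ g := hg.differentiable (by norm_num)
  have hd2 : ContDiff ℝ ((2:ℕ):ℕ∞) (deriv g) := (contDiff_succ_iff_deriv.mp h3).2.2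
  have hd2' : ContDiff ℝ ((1:ℕ)+1) (deriv g) := by exact_mod_cast hd2
  have hg2 : Differentiable ℝ (deriv g) := hd2.differentiable (by norm_num)
  have hd1 : ContDiff ℝ ((1:ℕ):ℕ∞) (deriv (deriv g)) := (contDiff_succ_iff_deriv.mp hd2').2.2
  have hg3 : Differentiable ℝ (deriv (deriv g)) := hd1.differentiable (by norm_num)
  have e1 := deriv_cmul_neg_div g hg1 c t
  have e2 := deriv_cmul_neg_div (deriv g) hg2 (c * (-1/t)) t
  have e3 := deriv_cmul_neg_div (deriv (deriv g)) hg3 (c * (-1/t) * (-1/t)) t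
  funext y
  simp only [iteratedDeriv_succ, iteratedDeriv_zero]
  rw [e1, e2, e3]
  ring


/-- Let `σ` be nondecreasing, bounded and right-continuous (a Stieltjes
function) with Lebesgue–Stieltjes measure `μ_σ`. Let `φ̂(z;t₁,t₃)` be `C³` in `t₁`, `C¹` in
`(t₁,t₃)` on `ℝ × (0,∞)`, with `μ_σ`-integrable squares and products, and define
`φ(z;x,t) := t^{-1/2}·φ̂(z;−x/t, 1/(3t²))`. If `φ` satisfies
`−∂_tφ = (2/3)∂_x³φ + φ/(2t) + (x/t)∂_xφ − (2/t)φ∫φ∂_xφ dμ_σ − (2/t)∂_xφ∫φ² dμ_σ`,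
then `φ̂` satisfies the integro-differential mKdV equation
`∂_{t₃}φ̂ = −∂_{t₁}³φ̂ + 3∂_{t₁}φ̂·∫φ̂² dμ_σ + 3φ̂·∫φ̂ ∂_{t₁}φ̂ dμ_σ`. -/
theorem stmt_7 (f : StieltjesFunction ℝ) (hbdd : ∃ M : ℝ, ∀ r : ℝ, |f r| ≤ M)
    (φhat : ℝ → ℝ → ℝ → ℝ)
    (hC3 : ∀ z t₃ : ℝ, 0 < t₃ → ContDiff ℝ 3 (fun t₁ => φhat z t₁ t₃))
    (hC1 : ∀ z : ℝ, ContDiffOn ℝ 1 (fun p : ℝ × ℝ => φhat z p.1 p.2)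
      {p : ℝ × ℝ | 0 < p.2})
    (hInt1 : ∀ t₁ t₃ : ℝ, 0 < t₃ → Integrable (fun r => (φhat r t₁ t₃) ^ 2) f.measure)
    (hInt2 : ∀ t₁ t₃ : ℝ, 0 < t₃ →
      Integrable (fun r => φhat r t₁ t₃ * deriv (fun y => φhat r y t₃) t₁) f.measure)
    (φ : ℝ → ℝ → ℝ → ℝ)
    (hφ : ∀ z x t : ℝ, 0 < t →
      φ z x t = t ^ (-(1 / 2) : ℝ) * φhat z (-x / t) (1 / (3 * t ^ 2)))
    (hPDE : ∀ z x t : ℝ, 0 < t →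
      -deriv (fun s => φ z x s) t
        = (2 / 3) * iteratedDeriv 3 (fun y => φ z y t) x + φ z x t / (2 * t)
          + (x / t) * deriv (fun y => φ z y t) x
          - (2 / t) * φ z x t * ∫ r, φ r x t * deriv (fun y => φ r y t) x ∂f.measure
          - (2 / t) * deriv (fun y => φ z y t) x * ∫ r, (φ r x t) ^ 2 ∂f.measure) :
    ∀ z t₁ t₃ : ℝ, 0 < t₃ →
      deriv (fun s => φhat z t₁ s) t₃
        = -iteratedDeriv 3 (fun y => φhat z y t₃) t₁
          + 3 * deriv (fun y => φhat z y t₃) t₁ * ∫ r, (φhat r t₁ t₃) ^ 2 ∂f.measure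
          + 3 * φhat z t₁ t₃ *
              ∫ r, φhat r t₁ t₃ * deriv (fun y => φhat r y t₃) t₁ ∂f.measure := by
  intro z t₁ t₃ ht₃
  set t : ℝ := (Real.sqrt (3 * t₃))⁻¹ with htdef
  have h3t₃ : 0 < 3 * t₃ := by linarith
  have ht : 0 < t := by
    have := Real.sqrt_pos.mpr h3t₃
    positivity
  have htsq : t ^ 2 = (3 * t₃)⁻¹ := by
    rw [htdef, inv_pow, Real.sq_sqrt h3t₃.le]
  have ht2 : 1 / (3 * t ^ 2) = t₃ := by
    rw [htsq]; field_simp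
  set x : ℝ := -t₁ * t with hxdef
  have hx : -x / t = t₁ := by
    rw [hxdef]; field_simp
  set c : ℝ := t ^ (-(1/2 : ℝ)) with hcdef
  have hc : 0 < c := Real.rpow_pos_of_pos ht _
  have hct2 : c ^ 2 = 1 / t := by
    rw [hcdef, sq, ← Real.rpow_add ht,
      show (-(1/2 : ℝ)) + -(1/2) = -1 by norm_num, Real.rpow_neg_one, one_div]
  -- function equality in x
  have hφx : ∀ w : ℝ, (fun y => φ w y t) = fun y => c * φhat w (-y / t) t₃ := by
    intro w; funext y; rw [hφ w y t ht, ht2]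
  have hdiffg : ∀ w : ℝ, Differentiable ℝ (fun u => φhat w u t₃) :=
    fun w => (hC3 w t₃ ht₃).differentiable (by norm_num)
  have hDx : ∀ w : ℝ, deriv (fun y => φ w y t) x
      = c * (-1 / t) * deriv (fun u => φhat w u t₃) t₁ := by
    intro w
    rw [hφx w, deriv_cmul_neg_div _ (hdiffg w) c t]
    simp only []
    rw [hx]
  have hD3 : iteratedDeriv 3 (fun y => φ z y t) x
      = c * (-1 / t) ^ 3 * iteratedDeriv 3 (fun u => φhat z u t₃) t₁ := by
    rw [hφx z, iter3_cmul_neg_div _ (hC3 z t₃ ht₃) c t]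
    simp only []
    rw [hx]
  have hφval : ∀ w : ℝ, φ w x t = c * φhat w t₁ t₃ := by
    intro w; rw [hφ w x t ht, ht2, hx]
  -- integrals
  have hI1 : (∫ r, (φ r x t) ^ 2 ∂f.measure)
      = c ^ 2 * ∫ r, (φhat r t₁ t₃) ^ 2 ∂f.measure := by
    rw [show (fun r => (φ r x t) ^ 2) = fun r => c ^ 2 * (φhat r t₁ t₃) ^ 2 from
      funext fun r => by rw [hφval r]; ring, integral_const_mul]
  have hI2 : (∫ r, φ r x t * deriv (fun y => φ r y t) x ∂f.measure)
      = (c ^ 2 * (-1 / t)) *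
        ∫ r, φhat r t₁ t₃ * deriv (fun u => φhat r u t₃) t₁ ∂f.measure := by
    rw [show (fun r => φ r x t * deriv (fun y => φ r y t) x)
        = fun r => (c ^ 2 * (-1 / t)) *
            (φhat r t₁ t₃ * deriv (fun u => φhat r u t₃) t₁) from
      funext fun r => by rw [hφval r, hDx r]; ring, integral_const_mul]
  -- t-derivative
  have hψ : DifferentiableAt ℝ (fun p : ℝ × ℝ => φhat z p.1 p.2) (t₁, t₃) := by
    have hopen : IsOpen {p : ℝ × ℝ | 0 < p.2} := isOpen_lt continuous_const continuous_snd
    exact ((hC1 z).differentiableOn one_ne_zero).differentiableAt (hopen.mem_nhds ht₃)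
  set L := fderiv ℝ (fun p : ℝ × ℝ => φhat z p.1 p.2) (t₁, t₃) with hLdef
  have hL : HasFDerivAt (fun p : ℝ × ℝ => φhat z p.1 p.2) L (t₁, t₃) := hψ.hasFDerivAt
  have hL10 : L (1, 0) = deriv (fun y => φhat z y t₃) t₁ := by
    have h := hL.comp_hasDerivAt t₁ ((hasDerivAt_id t₁).prodMk (hasDerivAt_const t₁ t₃))
    exact h.deriv.symm
  have hL01 : L (0, 1) = deriv (fun s => φhat z t₁ s) t₃ := by
    have h := hL.comp_hasDerivAt t₃ ((hasDerivAt_const t₃ t₁).prodMk (hasDerivAt_id t₃))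
    exact h.deriv.symm
  have hLlin : ∀ a b : ℝ, L (a, b) = a * L (1, 0) + b * L (0, 1) := by
    intro a b
    have hab : ((a, b) : ℝ × ℝ) = a • ((1 : ℝ), (0 : ℝ)) + b • ((0 : ℝ), (1 : ℝ)) := by
      simp
    rw [hab, L.map_add, L.map_smul, L.map_smul, smul_eq_mul, smul_eq_mul]
  -- inner derivative
  have h1 : HasDerivAt (fun s : ℝ => -x / s) (x / t ^ 2) t := by
    have h := (hasDerivAt_inv (ne_of_gt ht)).const_mul (-x)
    simp only [div_eq_mul_inv]
    refine h.congr_deriv ?_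
    ring
  have h2 : HasDerivAt (fun s : ℝ => 1 / (3 * s ^ 2)) (-2 / (3 * t ^ 3)) t := by
    have hpow : HasDerivAt (fun s : ℝ => 3 * s ^ 2) (3 * (2 * t)) t := by
      simpa using (hasDerivAt_pow 2 t).const_mul 3
    have h := hpow.inv (by positivity)
    simp only [one_div]
    refine h.congr_deriv ?_
    field_simp
  have hht : HasDerivAt (fun s : ℝ => ((-x / s, 1 / (3 * s ^ 2)) : ℝ × ℝ))
      (x / t ^ 2, -2 / (3 * t ^ 3)) t := h1.prodMk h2
  have hpt : ((-x / t : ℝ), (1 / (3 * t ^ 2) : ℝ)) = (t₁, t₃) := by rw [hx, ht2]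
  have hcomp : HasDerivAt (fun s : ℝ => φhat z (-x / s) (1 / (3 * s ^ 2)))
      (L (x / t ^ 2, -2 / (3 * t ^ 3))) t := by
    rw [← hpt] at hL
    exact hL.comp_hasDerivAt t hht
  have hAt : HasDerivAt (fun s : ℝ => s ^ (-(1/2 : ℝ)))
      ((-(1/2 : ℝ)) * t ^ ((-(1/2 : ℝ)) - 1)) t :=
    Real.hasDerivAt_rpow_const (Or.inl (ne_of_gt ht))
  have hG := hAt.mul hcomp
  have hev : (fun s => φ z x s) =ᶠ[nhds t]
      (fun s : ℝ => s ^ (-(1/2 : ℝ)) * φhat z (-x / s) (1 / (3 * s ^ 2))) := by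
    filter_upwards [isOpen_Ioi.mem_nhds ht] with s hs
    exact hφ z x s hs
  have hDt : deriv (fun s => φ z x s) t
      = (-(1/2 : ℝ)) * t ^ ((-(1/2 : ℝ)) - 1) * φhat z t₁ t₃
        + c * ((x / t ^ 2) * L (1, 0) + (-2 / (3 * t ^ 3)) * L (0, 1)) := by
    have h := (hG.congr_of_eventuallyEq hev).deriv
    rw [h, hx, ht2, hLlin]
  have hpow2 : t ^ ((-(1/2 : ℝ)) - 1) = c / t := by
    rw [Real.rpow_sub ht, Real.rpow_one, hcdef]
  -- the PDE instance
  have E := hPDE z x t ht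
  rw [hDt, hD3, hDx z, hφval z, hI1, hI2, hpow2, hL10] at E
  rw [← hL01]
  set P := φhat z t₁ t₃
  set P₁ := deriv (fun y => φhat z y t₃) t₁
  set P₃ := iteratedDeriv 3 (fun u => φhat z u t₃) t₁
  set I₁ := ∫ r, (φhat r t₁ t₃) ^ 2 ∂f.measure
  set I₂ := ∫ r, φhat r t₁ t₃ * deriv (fun u => φhat r u t₃) t₁ ∂f.measure
  have hc0 : (2 * c / (3 * t ^ 3)) ≠ 0 := by positivity
  apply mul_left_cancel₀ hc0
  linear_combination E + 2 * c * (P * I₂ + P₁ * I₁) / t ^ 2 * hct2
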